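/- With the symplectic rank 𝔰 and stellar rank r⋆ as non-Gaussianity monotones satisfying 𝔰(|2⟩) = 1, r⋆(|2⟩) = 2, 𝔰(|1⟩⊗|1⟩) = 2, r⋆(|1⟩⊗|1⟩) = 2, and additivity under tensor powers, the abstract rate bounds imply Distill(|2⟩ → |1⟩^⊗2) ≤ 1/2 while Cost(|1⟩^⊗2 → |2⟩) ≥ 1; hence Distill(|2⟩ → |1⟩^⊗2) < Cost(|1⟩^⊗2 → |2⟩), i.e. the resource theory is irreversible. -/
import Mathlib


/-- Irreversibility of the resource theory of non-Gaussianity under exact free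
(post-selected Gaussian) operations: with monotones `𝔰` (symplectic rank) and `r⋆`
(stellar rank) taking the values `𝔰(|2⟩)=1, r⋆(|2⟩)=2, 𝔰(|1⟩⊗|1⟩)=2, r⋆(|1⟩⊗|1⟩)=2`
and additive on tensor powers of these states, the exact distillable rate
`Distill(|2⟩ → |1⟩^⊗2)` is at most `1/2` while the exact cost rate
`Cost(|1⟩^⊗2 → |2⟩)` is at least `1`; in particular they differ. -/
theorem nonGaussianity_irreversible {States : Type*} (pow : States → ℕ → States)
    (Free : Set (States → States)) (s r : States → ℕ)
    (ket2 ket11 : States)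
    (hsmono : ∀ Λ ∈ Free, ∀ x, s (Λ x) ≤ s x)
    (hrmono : ∀ Λ ∈ Free, ∀ x, r (Λ x) ≤ r x)
    (hs2 : s ket2 = 1) (hr2 : r ket2 = 2)
    (hs11 : s ket11 = 2) (hr11 : r ket11 = 2)
    (hsadd2 : ∀ n, s (pow ket2 n) = n * s ket2)
    (hsadd11 : ∀ n, s (pow ket11 n) = n * s ket11)
    (hradd2 : ∀ n, r (pow ket2 n) = n * r ket2)
    (hradd11 : ∀ n, r (pow ket11 n) = n * r ket11)
    (hcostNonempty :
      {x : ℝ | ∃ n m : ℕ, 0 < n ∧ 0 < m ∧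
        (∃ Λ ∈ Free, Λ (pow ket11 n) = pow ket2 m) ∧ x = (n : ℝ) / m}.Nonempty) :
    sSup {x : ℝ | ∃ n m : ℕ, 0 < n ∧ 0 < m ∧
        (∃ Λ ∈ Free, Λ (pow ket2 n) = pow ket11 m) ∧ x = (m : ℝ) / n} ≤ 1 / 2 ∧
    1 ≤ sInf {x : ℝ | ∃ n m : ℕ, 0 < n ∧ 0 < m ∧
        (∃ Λ ∈ Free, Λ (pow ket11 n) = pow ket2 m) ∧ x = (n : ℝ) / m} ∧
    sSup {x : ℝ | ∃ n m : ℕ, 0 < n ∧ 0 < m ∧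
        (∃ Λ ∈ Free, Λ (pow ket2 n) = pow ket11 m) ∧ x = (m : ℝ) / n} <
      sInf {x : ℝ | ∃ n m : ℕ, 0 < n ∧ 0 < m ∧
        (∃ Λ ∈ Free, Λ (pow ket11 n) = pow ket2 m) ∧ x = (n : ℝ) / m} := by
  have hsup : sSup {x : ℝ | ∃ n m : ℕ, 0 < n ∧ 0 < m ∧
      (∃ Λ ∈ Free, Λ (pow ket2 n) = pow ket11 m) ∧ x = (m : ℝ) / n} ≤ 1 / 2 := by
    apply Real.sSup_le
    · rintro x ⟨n, m, hn, hm, ⟨Λ, hΛ, heq⟩, rfl⟩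
      have key : 2 * m ≤ n := by
        have := hsmono Λ hΛ (pow ket2 n)
        rw [heq, hsadd11, hsadd2, hs2, hs11] at this
        omega
      rw [div_le_div_iff₀ (by positivity) (by norm_num)]
      have : (2 : ℝ) * m ≤ n := by exact_mod_cast key
      linarith
    · norm_num
  have hinf : 1 ≤ sInf {x : ℝ | ∃ n m : ℕ, 0 < n ∧ 0 < m ∧
      (∃ Λ ∈ Free, Λ (pow ket11 n) = pow ket2 m) ∧ x = (n : ℝ) / m} := by
    apply le_csInf hcostNonempty
    rintro x ⟨n, m, hn, hm, ⟨Λ, hΛ, heq⟩, rfl⟩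
    have key : m ≤ n := by
      have := hrmono Λ hΛ (pow ket11 n)
      rw [heq, hradd2, hradd11, hr2, hr11] at this
      omega
    rw [le_div_iff₀ (by positivity), one_mul]
    exact_mod_cast key
  exact ⟨hsup, hinf, lt_of_le_of_lt hsup (by linarith)⟩
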